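/- Let P ∈ ℝ^{d×d} be symmetric, λ, γ̂ ∈ ℝ, and suppose the block matrix M = [[AᵀPA − P, AᵀPB₁, AᵀPB₂], [B₁ᵀPA, B₁ᵀPB₁, B₁ᵀPB₂], [B₂ᵀPA, B₂ᵀPB₁, B₂ᵀPB₂ − γ̂²I]] + λ·NᵀSN + KᵀK is negative definite, where N = [[C₁, D₁₁, D₁₂], [0, 1, 0]], S = [[−α̂β̂, (α̂+β̂)/2], [(α̂+β̂)/2, −1]], and K = [C₂, D₂₁, D₂₂]. Then for every x ∈ ℝ^d, h ∈ ℝ, r ∈ ℝ^k with (x, h, r) ≠ 0, writing x⁺ = Ax + B₁h + B₂r, p = C₁x + D₁₁h + D₁₂r, and e = C₂x + D₂₁h + D₂₂r, the dissipation inequality (x⁺)ᵀP x⁺ − xᵀP x − γ̂² rᵀr + λ(h − α̂p)(β̂p − h) + eᵀe < 0 holds. -/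

import Mathlib

open Matrix Finset

/-- Horizontal concatenation of three matrices with the same row type. -/
noncomputable def concat3 {m : Type*} {d k : ℕ} (X : Matrix m (Fin d) ℝ) (Y : Matrix m (Fin 1) ℝ)
    (Z : Matrix m (Fin k) ℝ) : Matrix m (Fin d ⊕ (Fin 1 ⊕ Fin k)) ℝ :=
  Matrix.of fun i => Sum.elim (X i) (Sum.elim (Y i) (Z i))

/-- The matrix N = [[C₁, D₁₁, D₁₂], [0, 1, 0]]. -/
noncomputable def Nmat {d k : ℕ} (C₁ : Matrix (Fin 1) (Fin d) ℝ) (D₁₁ : ℝ)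
    (D₁₂ : Matrix (Fin 1) (Fin k) ℝ) : Matrix (Fin 2) (Fin d ⊕ (Fin 1 ⊕ Fin k)) ℝ :=
  concat3 (Matrix.of ![C₁ 0, 0]) (Matrix.of ![fun _ => D₁₁, fun _ => 1])
    (Matrix.of ![D₁₂ 0, 0])

/-- The sector matrix S = [[−α̂β̂, (α̂+β̂)/2], [(α̂+β̂)/2, −1]]. -/
noncomputable def Smat (αhat βhat : ℝ) : Matrix (Fin 2) (Fin 2) ℝ :=
  !![-(αhat * βhat), (αhat + βhat) / 2; (αhat + βhat) / 2, -1]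

/-- The block-diagonal matrix diag(P, 0, γ̂²·I). -/
noncomputable def diag3 {d k : ℕ} (P : Matrix (Fin d) (Fin d) ℝ) (γhat : ℝ) :
    Matrix (Fin d ⊕ (Fin 1 ⊕ Fin k)) (Fin d ⊕ (Fin 1 ⊕ Fin k)) ℝ :=
  Matrix.fromBlocks P 0 0 (Matrix.fromBlocks 0 0 0 (γhat ^ 2 • (1 : Matrix (Fin k) (Fin k) ℝ)))

/-- The LMI matrix
M = [[AᵀPA − P, AᵀPB₁, AᵀPB₂], [B₁ᵀPA, B₁ᵀPB₁, B₁ᵀPB₂], [B₂ᵀPA, B₂ᵀPB₁, B₂ᵀPB₂ − γ̂²I]]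
    + λ·NᵀSN + KᵀK
expressed as [A B₁ B₂]ᵀ P [A B₁ B₂] − diag(P, 0, γ̂²I) + λ·NᵀSN + KᵀK. -/
noncomputable def lmiMat {d k l : ℕ}
    (A : Matrix (Fin d) (Fin d) ℝ) (B₁ : Matrix (Fin d) (Fin 1) ℝ)
    (B₂ : Matrix (Fin d) (Fin k) ℝ)
    (C₁ : Matrix (Fin 1) (Fin d) ℝ) (D₁₁ : ℝ) (D₁₂ : Matrix (Fin 1) (Fin k) ℝ)
    (C₂ : Matrix (Fin l) (Fin d) ℝ) (D₂₁ : Matrix (Fin l) (Fin 1) ℝ)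
    (D₂₂ : Matrix (Fin l) (Fin k) ℝ)
    (P : Matrix (Fin d) (Fin d) ℝ) (lam γhat αhat βhat : ℝ) :
    Matrix (Fin d ⊕ (Fin 1 ⊕ Fin k)) (Fin d ⊕ (Fin 1 ⊕ Fin k)) ℝ :=
  (concat3 A B₁ B₂)ᵀ * P * concat3 A B₁ B₂ - diag3 P γhat
    + lam • ((Nmat C₁ D₁₁ D₁₂)ᵀ * Smat αhat βhat * Nmat C₁ D₁₁ D₁₂)
    + (concat3 C₂ D₂₁ D₂₂)ᵀ * concat3 C₂ D₂₁ D₂₂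

lemma concat3_mulVec {m : Type*} {d k : ℕ} (X : Matrix m (Fin d) ℝ) (Y : Matrix m (Fin 1) ℝ)
    (Z : Matrix m (Fin k) ℝ) (x : Fin d → ℝ) (y : Fin 1 → ℝ) (r : Fin k → ℝ) :
    concat3 X Y Z *ᵥ Sum.elim x (Sum.elim y r) = X *ᵥ x + Y *ᵥ y + Z *ᵥ r := by
  funext i
  simp [concat3, Matrix.mulVec, dotProduct, Fintype.sum_sum_type, add_assoc]

lemma transpose_quad {m n : Type*} [Fintype m] [Fintype n]
    (X : Matrix m n ℝ) (P : Matrix m m ℝ) (z : n → ℝ) :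
    z ⬝ᵥ (Xᵀ * P * X) *ᵥ z = (X *ᵥ z) ⬝ᵥ P *ᵥ (X *ᵥ z) := by
  rw [← Matrix.mulVec_mulVec, ← Matrix.mulVec_mulVec, Matrix.dotProduct_mulVec,
    Matrix.vecMul_transpose]

/-- If P is symmetric and the LMI matrix is negative definite, then for every
(x, h, r) ≠ 0, writing x⁺ = Ax + B₁h + B₂r, p = C₁x + D₁₁h + D₁₂r,
e = C₂x + D₂₁h + D₂₂r, the strict dissipation inequality
(x⁺)ᵀPx⁺ − xᵀPx − γ̂²rᵀr + λ(h − α̂p)(β̂p − h) + eᵀe < 0 holds. -/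
theorem lmi_implies_dissipation {d k l : ℕ}
    (A : Matrix (Fin d) (Fin d) ℝ) (B₁ : Matrix (Fin d) (Fin 1) ℝ)
    (B₂ : Matrix (Fin d) (Fin k) ℝ)
    (C₁ : Matrix (Fin 1) (Fin d) ℝ) (D₁₁ : ℝ) (D₁₂ : Matrix (Fin 1) (Fin k) ℝ)
    (C₂ : Matrix (Fin l) (Fin d) ℝ) (D₂₁ : Matrix (Fin l) (Fin 1) ℝ)
    (D₂₂ : Matrix (Fin l) (Fin k) ℝ)
    (αhat βhat : ℝ)
    (P : Matrix (Fin d) (Fin d) ℝ) (lam γhat : ℝ)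
    (hP : P.IsSymm)
    (hM : (-(lmiMat A B₁ B₂ C₁ D₁₁ D₁₂ C₂ D₂₁ D₂₂ P lam γhat αhat βhat)).PosDef)
    (x : Fin d → ℝ) (h : ℝ) (r : Fin k → ℝ)
    (hnz : ¬(x = 0 ∧ h = 0 ∧ r = 0)) :
    (A.mulVec x + B₁.mulVec (fun _ => h) + B₂.mulVec r) ⬝ᵥ
        P.mulVec (A.mulVec x + B₁.mulVec (fun _ => h) + B₂.mulVec r)
      - x ⬝ᵥ P.mulVec x - γhat ^ 2 * (r ⬝ᵥ r)
      + lam * (h - αhat * (C₁ 0 ⬝ᵥ x + D₁₁ * h + D₁₂ 0 ⬝ᵥ r))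
          * (βhat * (C₁ 0 ⬝ᵥ x + D₁₁ * h + D₁₂ 0 ⬝ᵥ r) - h)
      + (C₂.mulVec x + D₂₁.mulVec (fun _ => h) + D₂₂.mulVec r) ⬝ᵥ
          (C₂.mulVec x + D₂₁.mulVec (fun _ => h) + D₂₂.mulVec r) < 0 := by
  classical
  set z : Fin d ⊕ (Fin 1 ⊕ Fin k) → ℝ := Sum.elim x (Sum.elim (fun _ => h) r) with hzdef
  have hz : z ≠ 0 := by
    intro h0
    apply hnz
    refine ⟨funext fun j => ?_, ?_, funext fun j => ?_⟩
    · exact congrFun h0 (Sum.inl j)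
    · exact congrFun h0 (Sum.inr (Sum.inl 0))
    · exact congrFun h0 (Sum.inr (Sum.inr j))
  have key := hM.dotProduct_mulVec_pos hz
  rw [star_trivial, Matrix.neg_mulVec, dotProduct_neg] at key
  have key' : z ⬝ᵥ (lmiMat A B₁ B₂ C₁ D₁₁ D₁₂ C₂ D₂₁ D₂₂ P lam γhat αhat βhat) *ᵥ z < 0 :=
    by linarith
  set pval : ℝ := C₁ 0 ⬝ᵥ x + D₁₁ * h + D₁₂ 0 ⬝ᵥ r with hp
  have hN : Nmat C₁ D₁₁ D₁₂ *ᵥ z = ![pval, h] := by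
    rw [hzdef, Nmat, concat3_mulVec]
    funext i
    fin_cases i <;>
      simp [Matrix.mulVec, dotProduct, hp]
  have hS : (![pval, h] : Fin 2 → ℝ) ⬝ᵥ Smat αhat βhat *ᵥ ![pval, h]
      = (h - αhat * pval) * (βhat * pval - h) := by
    simp [Smat, Matrix.mulVec, dotProduct, Fin.sum_univ_two]
    ring
  have hdiag : z ⬝ᵥ (diag3 P γhat : Matrix (Fin d ⊕ (Fin 1 ⊕ Fin k)) _ ℝ) *ᵥ z
      = x ⬝ᵥ P *ᵥ x + γhat ^ 2 * (r ⬝ᵥ r) := by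
    rw [hzdef]
    simp [diag3, Matrix.fromBlocks_mulVec, sumElim_dotProduct_sumElim,
      Matrix.smul_mulVec, dotProduct_smul, smul_eq_mul]
  have hA : concat3 A B₁ B₂ *ᵥ z
      = A *ᵥ x + B₁ *ᵥ (fun _ => h) + B₂ *ᵥ r := by
    rw [hzdef, concat3_mulVec]
  have hC : concat3 C₂ D₂₁ D₂₂ *ᵥ z
      = C₂ *ᵥ x + D₂₁ *ᵥ (fun _ => h) + D₂₂ *ᵥ r := by
    rw [hzdef, concat3_mulVec]
  have expand : z ⬝ᵥ (lmiMat A B₁ B₂ C₁ D₁₁ D₁₂ C₂ D₂₁ D₂₂ P lam γhat αhat βhat) *ᵥ z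
      = (A *ᵥ x + B₁ *ᵥ (fun _ => h) + B₂ *ᵥ r) ⬝ᵥ
          P *ᵥ (A *ᵥ x + B₁ *ᵥ (fun _ => h) + B₂ *ᵥ r)
        - x ⬝ᵥ P *ᵥ x - γhat ^ 2 * (r ⬝ᵥ r)
        + lam * (h - αhat * pval) * (βhat * pval - h)
        + (C₂ *ᵥ x + D₂₁ *ᵥ (fun _ => h) + D₂₂ *ᵥ r) ⬝ᵥ
            (C₂ *ᵥ x + D₂₁ *ᵥ (fun _ => h) + D₂₂ *ᵥ r) := by
    have hK : (concat3 C₂ D₂₁ D₂₂)ᵀ * concat3 C₂ D₂₁ D₂₂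
        = (concat3 C₂ D₂₁ D₂₂)ᵀ * (1 : Matrix (Fin l) (Fin l) ℝ) * concat3 C₂ D₂₁ D₂₂ :=
      (congrArg (· * concat3 C₂ D₂₁ D₂₂) (Matrix.mul_one _)).symm
    unfold lmiMat
    rw [hK]
    rw [Matrix.add_mulVec, Matrix.add_mulVec, Matrix.sub_mulVec,
      dotProduct_add, dotProduct_add, dotProduct_sub,
      Matrix.smul_mulVec, dotProduct_smul, smul_eq_mul,
      transpose_quad, transpose_quad, transpose_quad, hdiag, hA, hC, hN, hS,
      Matrix.one_mulVec]
    ring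
  rw [expand] at key'
  exact key'
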